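/- Let H ≅ H ⊕ H be an infinite-dimensional separable Hilbert space. Define φ : P(H) → B(H ⊕ H) by φ(P) = P ⊕ 0 if P has infinite corank, and φ(P) = P ⊕ I if P has finite corank. Then φ is a continuous multiplicative map on the set of projections P(H). -/
import Mathlib


open scoped Classical

section Aux

variable {H : Type*} [NormedAddCommGroup H] [InnerProductSpace ℂ H]

/-- The corank of `P` is finite. -/
def CorankFin (P : H →L[ℂ] H) : Prop :=
  Module.rank ℂ (LinearMap.range ((1 - P) : H →ₗ[ℂ] H)) < Cardinal.aleph0

lemma corank_eq (P : H →L[ℂ] H) :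
    Module.rank ℂ (LinearMap.range ((1 - P) : H →ₗ[ℂ] H)) =
      LinearMap.rank ((1 - P : H →L[ℂ] H) : H →ₗ[ℂ] H) := rfl

lemma prodMap_mul (P Q a b : H →L[ℂ] H) :
    (P.prodMap a) * (Q.prodMap b) = (P * Q).prodMap (a * b) := by
  ext x <;> rfl

lemma rank_le_of_eq_comp {P R : H →L[ℂ] H} (h : (1 - P) * (1 - R) = 1 - P) :
    LinearMap.rank ((1 - P : H →L[ℂ] H) : H →ₗ[ℂ] H) ≤
      LinearMap.rank ((1 - R : H →L[ℂ] H) : H →ₗ[ℂ] H) := by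
  have h' : ((1 - P : H →L[ℂ] H) : H →ₗ[ℂ] H) =
      ((1 - P : H →L[ℂ] H) : H →ₗ[ℂ] H).comp ((1 - R : H →L[ℂ] H) : H →ₗ[ℂ] H) := by
    conv_lhs => rw [← h]
    rfl
  rw [h']
  exact LinearMap.rank_comp_le_right _ _

lemma rank_le_of_eq_comp' {Q R : H →L[ℂ] H} (h : (1 - R) * (1 - Q) = 1 - Q) :
    LinearMap.rank ((1 - Q : H →L[ℂ] H) : H →ₗ[ℂ] H) ≤
      LinearMap.rank ((1 - R : H →L[ℂ] H) : H →ₗ[ℂ] H) := by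
  have h' : ((1 - Q : H →L[ℂ] H) : H →ₗ[ℂ] H) =
      ((1 - R : H →L[ℂ] H) : H →ₗ[ℂ] H).comp ((1 - Q : H →L[ℂ] H) : H →ₗ[ℂ] H) := by
    conv_lhs => rw [← h]
    rfl
  rw [h']
  exact LinearMap.rank_comp_le_left _ _

lemma corankFin_mul_iff {P Q : H →L[ℂ] H} (hP : P * P = P) (hQ : Q * Q = Q) :
    CorankFin (P * Q) ↔ CorankFin P ∧ CorankFin Q := by
  unfold CorankFin
  rw [corank_eq, corank_eq, corank_eq]
  constructor
  · intro h
    constructor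
    · refine lt_of_le_of_lt (rank_le_of_eq_comp ?_) h
      rw [sub_mul, one_mul, mul_sub, mul_one, ← mul_assoc, hP]
      abel
    · refine lt_of_le_of_lt (rank_le_of_eq_comp' ?_) h
      rw [sub_mul, one_mul, mul_sub, mul_one, mul_assoc, hQ]
      abel
  · rintro ⟨h1, h2⟩
    have hsum : (1 - P * Q : H →L[ℂ] H) = (1 - P) + P * (1 - Q) := by
      rw [mul_sub, mul_one]; abel
    have hco : ((1 - P * Q : H →L[ℂ] H) : H →ₗ[ℂ] H) =
        ((1 - P : H →L[ℂ] H) : H →ₗ[ℂ] H) +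
          ((P : H →ₗ[ℂ] H).comp ((1 - Q : H →L[ℂ] H) : H →ₗ[ℂ] H)) := by
      rw [hsum]; rfl
    rw [hco]
    refine lt_of_le_of_lt (LinearMap.rank_add_le _ _) (Cardinal.add_lt_aleph0 h1 ?_)
    exact lt_of_le_of_lt (LinearMap.rank_comp_le_right _ _) h2

lemma corankFin_stable {P Q : H →L[ℂ] H} (hQ : Q * Q = Q)
    (hnorm : ‖P - Q‖ < 1) (hfin : CorankFin P) : CorankFin Q := by
  by_contra hinfQ
  unfold CorankFin at hfin hinfQ
  rw [corank_eq] at hfin hinfQ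
  set p : H →ₗ[ℂ] H := ((1 - P : H →L[ℂ] H) : H →ₗ[ℂ] H) with hp
  set q : H →ₗ[ℂ] H := ((1 - Q : H →L[ℂ] H) : H →ₗ[ℂ] H) with hq
  set f : LinearMap.range q →ₗ[ℂ] H := p.comp (LinearMap.range q).subtype with hf
  have hrf : LinearMap.rank f < Cardinal.aleph0 :=
    lt_of_le_of_lt (LinearMap.rank_comp_le_left _ _) hfin
  have hker : LinearMap.ker f ≠ ⊥ := by
    intro hbot
    have hrn := LinearMap.rank_range_add_rank_ker f
    rw [hbot, rank_bot, add_zero] at hrn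
    apply hinfQ
    show Module.rank ℂ (LinearMap.range q) < Cardinal.aleph0
    rw [← hrn]
    exact hrf
  obtain ⟨x, hxker, hx0⟩ := (Submodule.ne_bot_iff _).mp hker
  set y : H := (x : H) with hy
  have hy0 : y ≠ 0 := fun h => hx0 (Subtype.ext h)
  have hpy : (1 - P) y = 0 := hxker
  have hPy : P y = y := by
    have h1 : y - P y = 0 := by simpa using hpy
    exact (sub_eq_zero.mp h1).symm
  have hqy : (1 - Q) y = y := by
    obtain ⟨z, hz⟩ := x.2
    have hz' : (1 - Q) z = y := hz
    have hidem : (1 - Q) * (1 - Q) = (1 - Q : H →L[ℂ] H) := by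
      rw [sub_mul, one_mul, mul_sub, mul_one, hQ]; abel
    calc (1 - Q) y = ((1 - Q) * (1 - Q)) z := by rw [ContinuousLinearMap.mul_apply, hz']
    _ = (1 - Q) z := by rw [hidem]
    _ = y := hz'
  have hQy : Q y = 0 := by
    have h1 : y - Q y = y := by simpa using hqy
    have := sub_eq_self.mp h1
    exact this
  have hPQ : (P - Q) y = y := by
    simp [ContinuousLinearMap.sub_apply, hPy, hQy]
  have hle := (P - Q).le_opNorm y
  rw [hPQ] at hle
  have hpos : (0 : ℝ) < ‖y‖ := norm_pos_iff.mpr hy0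
  nlinarith

end Aux

/-- On an infinite-dimensional separable Hilbert space `H ≅ H ⊕ H`, the map
`φ` on projections defined by `φ(P) = P ⊕ 0` if `P` has infinite corank and
`φ(P) = P ⊕ I` if `P` has finite corank is a continuous multiplicative map on
the set of projections `P(H)` (the corank of `P` being the rank of `I − P`). -/
theorem stmt17 {H : Type*} [NormedAddCommGroup H] [InnerProductSpace ℂ H]
    [CompleteSpace H] [TopologicalSpace.SeparableSpace H]
    (hinf : ¬ FiniteDimensional ℂ H)
    (φ : (H →L[ℂ] H) → ((H × H) →L[ℂ] (H × H)))
    (hφ : ∀ P : H →L[ℂ] H, φ P =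
      if Module.rank ℂ (LinearMap.range ((1 - P) : H →ₗ[ℂ] H)) < Cardinal.aleph0
      then P.prodMap 1 else P.prodMap 0) :
    ContinuousOn φ {P : H →L[ℂ] H | IsSelfAdjoint P ∧ P * P = P} ∧
    (∀ P Q : H →L[ℂ] H,
      (IsSelfAdjoint P ∧ P * P = P) → (IsSelfAdjoint Q ∧ Q * Q = Q) →
      (IsSelfAdjoint (P * Q) ∧ (P * Q) * (P * Q) = P * Q) →
      φ (P * Q) = φ P * φ Q) := by
  have hφ' : ∀ P : H →L[ℂ] H, φ P = if CorankFin P then P.prodMap 1 else P.prodMap 0 := by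
    intro P
    rw [hφ P]
    exact if_congr Iff.rfl rfl rfl
  constructor
  · intro P hP
    set S : Set (H →L[ℂ] H) := {P : H →L[ℂ] H | IsSelfAdjoint P ∧ P * P = P} with hS
    set c : H →L[ℂ] H := if CorankFin P then 1 else 0 with hc
    have hcont : Continuous fun Q : H →L[ℂ] H => Q.prodMap c := by
      have : (fun Q : H →L[ℂ] H => Q.prodMap c) =
          fun Q => ContinuousLinearMap.prodMapL ℂ H H H H (Q, c) := by
        funext Q
        simp [ContinuousLinearMap.prodMapL_apply]
      rw [this]
      exact (ContinuousLinearMap.prodMapL ℂ H H H H).continuous.comp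
        (continuous_id.prodMk continuous_const)
    have heq : φ =ᶠ[nhdsWithin P S] fun Q => Q.prodMap c := by
      have hball : ∀ᶠ Q in nhdsWithin P S, ‖Q - P‖ < 1 := by
        apply Filter.Eventually.filter_mono nhdsWithin_le_nhds
        have : Metric.ball P 1 ∈ nhds P := Metric.ball_mem_nhds P one_pos
        filter_upwards [this] with Q hQ
        rw [Metric.mem_ball, dist_eq_norm] at hQ
        exact hQ
      have hmem : ∀ᶠ Q in nhdsWithin P S, Q ∈ S := eventually_mem_nhdsWithin
      filter_upwards [hball, hmem] with Q hQn hQS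
      have hiff : CorankFin Q ↔ CorankFin P := by
        constructor
        · intro h
          exact corankFin_stable hP.2 hQn h
        · intro h
          exact corankFin_stable hQS.2 (by rw [norm_sub_rev]; exact hQn) h
      rw [hφ' Q, hc]
      by_cases h : CorankFin P
      · rw [if_pos (hiff.mpr h), if_pos h]
      · rw [if_neg (fun hh => h (hiff.mp hh)), if_neg h]
    refine (ContinuousWithinAt.congr_of_eventuallyEq ?_ heq ?_).mono (le_refl S)
    · exact hcont.continuousWithinAt
    · rw [hφ' P, hc]
      by_cases h : CorankFin P
      · rw [if_pos h, if_pos h]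
      · rw [if_neg h, if_neg h]
  · intro P Q hP hQ hPQ
    rw [hφ' P, hφ' Q, hφ' (P * Q)]
    have hiff := corankFin_mul_iff hP.2 hQ.2
    by_cases h1 : CorankFin P
    · by_cases h2 : CorankFin Q
      · rw [if_pos h1, if_pos h2, if_pos (hiff.mpr ⟨h1, h2⟩), prodMap_mul, one_mul]
      · rw [if_pos h1, if_neg h2, if_neg (fun h => h2 (hiff.mp h).2), prodMap_mul, mul_zero]
    · by_cases h2 : CorankFin Q
      · rw [if_neg h1, if_pos h2, if_neg (fun h => h1 (hiff.mp h).1), prodMap_mul, zero_mul]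
      · rw [if_neg h1, if_neg h2, if_neg (fun h => h1 (hiff.mp h).1), prodMap_mul, zero_mul]
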